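/- Soundness of step resolution: for all PLTL formulae A, B, C, D and every proposition symbol p, the formula (□(C ⇒ ◯(A ∨ p)) ∧ □(D ⇒ ◯(B ∨ ¬p))) ⇒ □((C ∧ D) ⇒ ◯(A ∨ B)) is valid, and the formula (□(start ⇒ A ∨ p) ∧ □(start ⇒ B ∨ ¬p)) ⇒ □(start ⇒ A ∨ B) is valid. -/
import Mathlib

/-- Syntax of Propositional Linear Temporal Logic over proposition symbols `P`. -/
inductive PLTL (P : Type) : Type
  | tru : PLTL P
  | fls : PLTL P
  | start : PLTL P
  | atom : P → PLTL P
  | neg : PLTL P → PLTL P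
  | conj : PLTL P → PLTL P → PLTL P
  | disj : PLTL P → PLTL P → PLTL P
  | impl : PLTL P → PLTL P → PLTL P
  | next : PLTL P → PLTL P
  | evtl : PLTL P → PLTL P
  | alw : PLTL P → PLTL P
  | untl : PLTL P → PLTL P → PLTL P
  | unls : PLTL P → PLTL P → PLTL P

namespace PLTL

/-- Satisfaction `(σ, i) ⊨ A` of a PLTL formula in a model `σ : ℕ → Set P` at index `i`. -/
def Sat {P : Type} (σ : ℕ → Set P) : PLTL P → ℕ → Prop
  | tru, _ => True
  | fls, _ => False
  | start, i => i = 0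
  | atom p, i => p ∈ σ i
  | neg A, i => ¬ Sat σ A i
  | conj A B, i => Sat σ A i ∧ Sat σ B i
  | disj A B, i => Sat σ A i ∨ Sat σ B i
  | impl A B, i => Sat σ A i → Sat σ B i
  | next A, i => Sat σ A (i + 1)
  | evtl A, i => ∃ k, i ≤ k ∧ Sat σ A k
  | alw A, i => ∀ j, i ≤ j → Sat σ A j
  | untl A B, i => ∃ k, i ≤ k ∧ Sat σ B k ∧ ∀ j, i ≤ j → j < k → Sat σ A j
  | unls A B, i =>
      (∃ k, i ≤ k ∧ Sat σ B k ∧ ∀ j, i ≤ j → j < k → Sat σ A j) ∨ (∀ j, i ≤ j → Sat σ A j)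

/-- A formula is valid iff it is satisfied at index 0 of every model. -/
def Valid {P : Type} (A : PLTL P) : Prop := ∀ σ : ℕ → Set P, Sat σ A 0

/-- A formula with no temporal connectives is propositionally valid iff
it is satisfied at every index of every model. -/
def PropValid {P : Type} (A : PLTL P) : Prop := ∀ (σ : ℕ → Set P) (i : ℕ), Sat σ A i

/-- A literal is a proposition symbol or a negated proposition symbol. -/
def IsLiteral {P : Type} : PLTL P → Prop
  | atom _ => True
  | neg (atom _) => True
  | _ => False

/-- A conjunction of literals. -/
def IsConjLits {P : Type} : PLTL P → Prop
  | atom _ => True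
  | neg (atom _) => True
  | conj A B => IsConjLits A ∧ IsConjLits B
  | _ => False

/-- Biconditional `A ⇔ B` as an abbreviation. -/
def piff {P : Type} (A B : PLTL P) : PLTL P := conj (impl A B) (impl B A)

/-- Finite disjunction. -/
def bigOr {P : Type} (l : List (PLTL P)) : PLTL P := l.foldr disj fls

/-- Finite conjunction. -/
def bigAnd {P : Type} (l : List (PLTL P)) : PLTL P := l.foldr conj tru

/-- The proposition symbols occurring in a formula. -/
def syms {P : Type} : PLTL P → Set P
  | tru => ∅
  | fls => ∅
  | start => ∅
  | atom p => {p}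
  | neg A => syms A
  | conj A B => syms A ∪ syms B
  | disj A B => syms A ∪ syms B
  | impl A B => syms A ∪ syms B
  | next A => syms A
  | evtl A => syms A
  | alw A => syms A
  | untl A B => syms A ∪ syms B
  | unls A B => syms A ∪ syms B

end PLTL

open PLTL in
/-- soundness of step resolution (the step case and the initial case). -/
theorem stmt_2 {P : Type} [Countable P] (A B C D : PLTL P) (p : P) :
    Valid (impl
      (conj (alw (impl C (next (disj A (atom p)))))
            (alw (impl D (next (disj B (neg (atom p)))))))
      (alw (impl (conj C D) (next (disj A B))))) ∧
    Valid (impl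
      (conj (alw (impl start (disj A (atom p))))
            (alw (impl start (disj B (neg (atom p))))))
      (alw (impl start (disj A B)))) := by
  constructor
  · intro σ
    simp only [Sat]
    rintro ⟨h1, h2⟩ j _ ⟨hC, hD⟩
    rcases h1 j (Nat.zero_le j) hC with hA | hp
    · exact Or.inl hA
    · rcases h2 j (Nat.zero_le j) hD with hB | hnp
      · exact Or.inr hB
      · exact absurd hp hnp
  · intro σ
    simp only [Sat]
    rintro ⟨h1, h2⟩ j _ hj
    rcases h1 j (Nat.zero_le j) hj with hA | hp
    · exact Or.inl hA
    · rcases h2 j (Nat.zero_le j) hj with hB | hnp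
      · exact Or.inr hB
      · exact absurd hp hnp
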